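/- Sum-of-squares criterion for degree-4 subharmonicity implies coefficient constraints: if the degree-4 homogeneous polynomial p = A_1 x_1^4 + A_2(x_1^3 x_2 + x_2 x_1^3) + A_3(x_1^2 x_2 x_1 + x_1 x_2 x_1^2) + A_4(x_1^2 x_2^2 + x_2^2 x_1^2) + A_5(x_1 x_2 x_1 x_2 + x_2 x_1 x_2 x_1) + A_6 x_1 x_2^2 x_1 + A_7(x_1 x_2^3 + x_2^3 x_1) + A_8 x_2 x_1^2 x_2 + A_9(x_2 x_1 x_2^2 + x_2^2 x_1 x_2) + A_{10} x_2^4 has matrix-positive Laplacian, then A_4 = −A_1, A_{10} = A_1, A_9 = −A_2, and A_7 = −A_3. -/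

import Mathlib

noncomputable section

/-- Variables: `some i` is `xᵢ`, `none` is the direction variable `h`. -/
abbrev Var (g : ℕ) := Option (Fin g)

/-- Noncommutative polynomials `ℝ⟨x₁,…,x_g,h⟩`. -/
abbrev NC (g : ℕ) := MonoidAlgebra ℝ (FreeMonoid (Var g))

/-- The monomial corresponding to a word. -/
def mono (g : ℕ) (w : List (Var g)) : NC g :=
  MonoidAlgebra.of ℝ (FreeMonoid (Var g)) (FreeMonoid.ofList w)

/-- The generator `xᵢ`. -/
def Xv (g : ℕ) (i : Fin g) : NC g := mono g [some i]

/-- The direction variable `h`. -/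
def Hv (g : ℕ) : NC g := mono g [none]

/-- Directional derivative of a word in `xᵢ` in direction `h`: sum of the
terms obtained by replacing one occurrence of `xᵢ` by `h`. -/
def wordD (g : ℕ) (i : Fin g) : List (Var g) → NC g
  | [] => 0
  | a :: w =>
      (if a = some i then mono g (none :: w) else 0) + mono g [a] * wordD g i w

/-- Directional derivative `D[p, xᵢ, h]`, extended linearly from words. -/
def D (g : ℕ) (i : Fin g) (p : NC g) : NC g :=
  Finsupp.sum p.coeff fun w c => c • wordD g i (FreeMonoid.toList w)

/-- The noncommutative Laplacian `Lap[p,h] := ∑ᵢ D[D[p,xᵢ,h],xᵢ,h]`. -/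
def Lap (g : ℕ) (p : NC g) : NC g := ∑ i : Fin g, D g i (D g i p)

/-- The transpose: linear anti-automorphism reversing words and fixing generators. -/
def transp (g : ℕ) (p : NC g) : NC g :=
  MonoidAlgebra.ofCoeff (Finsupp.mapDomain (fun w => FreeMonoid.ofList (FreeMonoid.toList w).reverse) p.coeff)

/-- Evaluation of a polynomial at a tuple of matrices (one for each variable). -/
def eval (g n : ℕ) (M : Var g → Matrix (Fin n) (Fin n) ℝ) (p : NC g) :
    Matrix (Fin n) (Fin n) ℝ :=
  Finsupp.sum p.coeff fun w c => c • ((FreeMonoid.toList w).map M).prod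

/-- `p` is a polynomial in `x₁,…,x_g` only (the variable `h` does not occur). -/
def NoH (g : ℕ) (p : NC g) : Prop :=
  ∀ w ∈ p.coeff.support, none ∉ FreeMonoid.toList w

/-- `p` is a homogeneous polynomial of degree `d` in the variables `x₁,…,x_g`. -/
def HomogX (g : ℕ) (d : ℕ) (p : NC g) : Prop :=
  ∀ w ∈ p.coeff.support, none ∉ FreeMonoid.toList w ∧ (FreeMonoid.toList w).length = d



private lemma mono_mul (g : ℕ) (w w' : List (Var g)) :
    mono g w * mono g w' = mono g (w ++ w') := by
  simp [mono, ← map_mul]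

private lemma D_add (g : ℕ) (i : Fin g) (p q : NC g) :
    D g i (p + q) = D g i p + D g i q := by
  classical
  unfold D
  rw [MonoidAlgebra.coeff_add]
  apply Finsupp.sum_add_index <;> intros <;> simp [add_smul]

private lemma D_smul (g : ℕ) (i : Fin g) (c : ℝ) (p : NC g) :
    D g i (c • p) = c • D g i p := by
  unfold D
  rw [MonoidAlgebra.coeff_smul, Finsupp.sum_smul_index (by intros; simp), Finsupp.smul_sum]
  simp [mul_smul]

private lemma D_mono (g : ℕ) (i : Fin g) (w : List (Var g)) :
    D g i (mono g w) = wordD g i w := by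
  unfold D mono
  rw [MonoidAlgebra.of_apply, MonoidAlgebra.coeff_single, Finsupp.sum_single_index (by simp)]
  simp [FreeMonoid.toList_ofList]

private lemma D_zero (g : ℕ) (i : Fin g) : D g i (0 : NC g) = 0 := by
  simp [D]

private lemma eval_add (g n : ℕ) (M : Var g → Matrix (Fin n) (Fin n) ℝ) (p q : NC g) :
    eval g n M (p + q) = eval g n M p + eval g n M q := by
  classical
  unfold eval
  rw [MonoidAlgebra.coeff_add]
  apply Finsupp.sum_add_index <;> intros <;> simp [add_smul]

private lemma eval_smul (g n : ℕ) (M : Var g → Matrix (Fin n) (Fin n) ℝ) (c : ℝ) (p : NC g) :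
    eval g n M (c • p) = c • eval g n M p := by
  unfold eval
  rw [MonoidAlgebra.coeff_smul, Finsupp.sum_smul_index (by intros; simp), Finsupp.smul_sum]
  simp [mul_smul]

private lemma eval_mono (g n : ℕ) (M : Var g → Matrix (Fin n) (Fin n) ℝ) (w : List (Var g)) :
    eval g n M (mono g w) = ((w.map M).prod) := by
  unfold eval mono
  rw [MonoidAlgebra.of_apply, MonoidAlgebra.coeff_single, Finsupp.sum_single_index (by simp)]
  simp [FreeMonoid.toList_ofList]

private lemma cons_val_five {α : Type*} {m : ℕ} (x : α) (u : Fin (m+5) → α) :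
    Matrix.vecCons x u 5 =
      Matrix.vecHead (Matrix.vecTail (Matrix.vecTail (Matrix.vecTail (Matrix.vecTail u)))) :=
  rfl

private lemma cons_val_six {α : Type*} {m : ℕ} (x : α) (u : Fin (m+6) → α) :
    Matrix.vecCons x u 6 =
      Matrix.vecHead (Matrix.vecTail (Matrix.vecTail (Matrix.vecTail (Matrix.vecTail
        (Matrix.vecTail u))))) :=
  rfl

set_option maxHeartbeats 4000000 in

/-- matrix positivity of the Laplacian of a general homogeneous
degree-4 polynomial forces the coefficient constraints
`A₄ = -A₁`, `A₁₀ = A₁`, `A₉ = -A₂`, `A₇ = -A₃`. -/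
theorem deg4_coefficient_constraints
    (A₁ A₂ A₃ A₄ A₅ A₆ A₇ A₈ A₉ A₁₀ : ℝ) (p : NC 2)
    (x₁ x₂ : NC 2) (hx₁ : x₁ = Xv 2 0) (hx₂ : x₂ = Xv 2 1)
    (hp : p = A₁ • (x₁ ^ 4)
        + A₂ • (x₁ ^ 3 * x₂ + x₂ * x₁ ^ 3)
        + A₃ • (x₁ ^ 2 * x₂ * x₁ + x₁ * x₂ * x₁ ^ 2)
        + A₄ • (x₁ ^ 2 * x₂ ^ 2 + x₂ ^ 2 * x₁ ^ 2)
        + A₅ • (x₁ * x₂ * x₁ * x₂ + x₂ * x₁ * x₂ * x₁)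
        + A₆ • (x₁ * x₂ ^ 2 * x₁)
        + A₇ • (x₁ * x₂ ^ 3 + x₂ ^ 3 * x₁)
        + A₈ • (x₂ * x₁ ^ 2 * x₂)
        + A₉ • (x₂ * x₁ * x₂ ^ 2 + x₂ ^ 2 * x₁ * x₂)
        + A₁₀ • (x₂ ^ 4))
    (hpos : ∀ (n : ℕ) (M : Var 2 → Matrix (Fin n) (Fin n) ℝ),
      (∀ v, (M v).IsSymm) → (eval 2 n M (Lap 2 p)).PosSemidef) :
    A₄ = -A₁ ∧ A₁₀ = A₁ ∧ A₉ = -A₂ ∧ A₇ = -A₃ := by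
  have hw : p = A₁ • (mono 2 [some 0, some 0, some 0, some 0])
      + A₂ • (mono 2 [some 0, some 0, some 0, some 1] + mono 2 [some 1, some 0, some 0, some 0])
      + A₃ • (mono 2 [some 0, some 0, some 1, some 0] + mono 2 [some 0, some 1, some 0, some 0])
      + A₄ • (mono 2 [some 0, some 0, some 1, some 1] + mono 2 [some 1, some 1, some 0, some 0])
      + A₅ • (mono 2 [some 0, some 1, some 0, some 1] + mono 2 [some 1, some 0, some 1, some 0])
      + A₆ • (mono 2 [some 0, some 1, some 1, some 0])
      + A₇ • (mono 2 [some 0, some 1, some 1, some 1] + mono 2 [some 1, some 1, some 1, some 0])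
      + A₈ • (mono 2 [some 1, some 0, some 0, some 1])
      + A₉ • (mono 2 [some 1, some 0, some 1, some 1] + mono 2 [some 1, some 1, some 0, some 1])
      + A₁₀ • (mono 2 [some 1, some 1, some 1, some 1]) := by
    subst hx₁ hx₂ hp
    simp only [Xv, pow_succ, pow_zero, one_mul, mono_mul, List.append_eq, List.cons_append,
      List.nil_append]
  have lapp : Lap 2 p =
      (2*(A₁ + A₄)) • mono 2 [some 0, some 0, none, none]
      + (2*(A₃ + A₇)) • mono 2 [some 0, some 1, none, none]
      + (2*(A₁ + A₅)) • mono 2 [some 0, none, some 0, none]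
      + (2*(A₃ + A₇)) • mono 2 [some 0, none, some 1, none]
      + (2*(A₁ + A₆)) • mono 2 [some 0, none, none, some 0]
      + (2*(A₂ + A₇)) • mono 2 [some 0, none, none, some 1]
      + (2*(A₂ + A₉)) • mono 2 [some 1, some 0, none, none]
      + (2*(A₄ + A₁₀)) • mono 2 [some 1, some 1, none, none]
      + (2*(A₂ + A₉)) • mono 2 [some 1, none, some 0, none]
      + (2*(A₅ + A₁₀)) • mono 2 [some 1, none, some 1, none]
      + (2*(A₂ + A₇)) • mono 2 [some 1, none, none, some 0]
      + (2*(A₈ + A₁₀)) • mono 2 [some 1, none, none, some 1]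
      + (2*(A₁ + A₈)) • mono 2 [none, some 0, some 0, none]
      + (2*(A₃ + A₉)) • mono 2 [none, some 0, some 1, none]
      + (2*(A₁ + A₅)) • mono 2 [none, some 0, none, some 0]
      + (2*(A₂ + A₉)) • mono 2 [none, some 0, none, some 1]
      + (2*(A₃ + A₉)) • mono 2 [none, some 1, some 0, none]
      + (2*(A₆ + A₁₀)) • mono 2 [none, some 1, some 1, none]
      + (2*(A₃ + A₇)) • mono 2 [none, some 1, none, some 0]
      + (2*(A₅ + A₁₀)) • mono 2 [none, some 1, none, some 1]
      + (2*(A₁ + A₄)) • mono 2 [none, none, some 0, some 0]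
      + (2*(A₂ + A₉)) • mono 2 [none, none, some 0, some 1]
      + (2*(A₃ + A₇)) • mono 2 [none, none, some 1, some 0]
      + (2*(A₄ + A₁₀)) • mono 2 [none, none, some 1, some 1] := by
    rw [hw]
    simp only [Lap, Fin.sum_univ_two, D_add, D_smul, D_mono]
    simp only [wordD, mono_mul, mul_add, mul_zero, add_zero, zero_add, reduceIte,
      List.cons_append, List.nil_append, List.append_nil, List.singleton_append, reduceCtorEq,
      Option.some.injEq, Fin.zero_eq_one_iff, Fin.one_eq_zero_iff, ite_false, ite_true]
    norm_num [D_add, D_smul, D_mono, D_zero]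
    simp only [wordD, mono_mul, mul_add, mul_zero, add_zero, zero_add, reduceIte,
      List.cons_append, List.nil_append, List.append_nil, List.singleton_append, reduceCtorEq]
    norm_num
    module
  have g0 : (0:ℝ) ≤ (4) * A₁ + (4) * A₄ := by
    have h := (hpos 4 (fun v => v.elim (!![0, 0, 0, 1; 0, 0, 0, 0; 0, 0, 0, 0; 1, 0, 0, 0])
        ![!![0, 1, 0, 0; 1, 0, 1, 0; 0, 1, 0, 0; 0, 0, 0, 0], !![0, 0, 0, 0; 0, 0, 0, 0; 0, 0, 0, 0; 0, 0, 0, 0]]) (by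
      rintro (_ | i)
      · ext a b; fin_cases a <;> fin_cases b <;> rfl
      · fin_cases i <;> ext a b <;> fin_cases a <;> fin_cases b <;> rfl)).dotProduct_mulVec_nonneg ![1,0,0,0]
    rw [lapp] at h
    simp only [eval_add, eval_smul, eval_mono, List.map_cons, List.map_nil,
      List.prod_cons, List.prod_nil, mul_one, Option.elim,
      Matrix.cons_val_zero, Matrix.cons_val_one, Matrix.head_cons,
      Matrix.add_mulVec, Matrix.smul_mulVec, ← Matrix.mulVec_mulVec] at h
    norm_num [Matrix.mulVec, dotProduct, Fin.sum_univ_succ, Matrix.cons_val_succ, Matrix.cons_val_zero, Matrix.of_apply] at h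
    linarith
  have g1 : (0:ℝ) ≤ (4) * A₄ + (4) * A₁₀ := by
    have h := (hpos 4 (fun v => v.elim (!![0, 0, 0, 1; 0, 0, 0, 0; 0, 0, 0, 0; 1, 0, 0, 0])
        ![!![0, 0, 0, 0; 0, 0, 0, 0; 0, 0, 0, 0; 0, 0, 0, 0], !![0, 1, 0, 0; 1, 0, 1, 0; 0, 1, 0, 0; 0, 0, 0, 0]]) (by
      rintro (_ | i)
      · ext a b; fin_cases a <;> fin_cases b <;> rfl
      · fin_cases i <;> ext a b <;> fin_cases a <;> fin_cases b <;> rfl)).dotProduct_mulVec_nonneg ![1,0,0,0]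
    rw [lapp] at h
    simp only [eval_add, eval_smul, eval_mono, List.map_cons, List.map_nil,
      List.prod_cons, List.prod_nil, mul_one, Option.elim,
      Matrix.cons_val_zero, Matrix.cons_val_one, Matrix.head_cons,
      Matrix.add_mulVec, Matrix.smul_mulVec, ← Matrix.mulVec_mulVec] at h
    norm_num [Matrix.mulVec, dotProduct, Fin.sum_univ_succ, Matrix.cons_val_succ, Matrix.cons_val_zero, Matrix.of_apply] at h
    linarith
  have g2 : (0:ℝ) ≤ (4) * A₂ + (4) * A₉ := by
    have h := (hpos 7 (fun v => v.elim (!![0, 0, 0, 0, 0, 0, 1; 0, 0, 0, 0, 0, 0, 0; 0, 0, 0, 0, 0, 0, 1; 0, 0, 0, 0, 0, 0, 0; 0, 0, 0, 0, 0, 0, 0; 0, 0, 0, 0, 0, 0, 1; 1, 0, 1, 0, 0, 1, 0])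
        ![!![0, 0, 0, 1, 0, 0, 0; 0, 0, 1, 0, 0, 0, 0; 0, 1, 0, 0, 0, 0, 0; 1, 0, 0, 0, 0, (-1), 0; 0, 0, 0, 0, 0, 0, 0; 0, 0, 0, (-1), 0, 0, 0; 0, 0, 0, 0, 0, 0, 0], !![0, 1, 0, 0, 0, 0, 0; 1, 0, 0, 0, 0, (-1), 0; 0, 0, 0, 0, 0, 0, 0; 0, 0, 0, 0, 1, 0, 0; 0, 0, 0, 1, 0, 0, 0; 0, (-1), 0, 0, 0, 0, 0; 0, 0, 0, 0, 0, 0, 0]]) (by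
      rintro (_ | i)
      · ext a b; fin_cases a <;> fin_cases b <;> rfl
      · fin_cases i <;> ext a b <;> fin_cases a <;> fin_cases b <;> rfl)).dotProduct_mulVec_nonneg ![1,0,0,0,0,0,0]
    rw [lapp] at h
    simp only [eval_add, eval_smul, eval_mono, List.map_cons, List.map_nil,
      List.prod_cons, List.prod_nil, mul_one, Option.elim,
      Matrix.cons_val_zero, Matrix.cons_val_one, Matrix.head_cons,
      Matrix.add_mulVec, Matrix.smul_mulVec, ← Matrix.mulVec_mulVec] at h
    norm_num [Matrix.mulVec, dotProduct, Fin.sum_univ_succ, Matrix.cons_val_succ, Matrix.cons_val_zero, Matrix.of_apply] at h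
    linarith
  have g3 : (0:ℝ) ≤ (4) * A₃ + (4) * A₇ := by
    have h := (hpos 7 (fun v => v.elim (!![0, 0, 0, 0, 0, 0, 1; 0, 0, 0, 0, 0, 0, 0; 0, 0, 0, 0, 0, 0, 0; 0, 0, 0, 0, 0, 0, 0; 0, 0, 0, 0, 0, 0, 1; 0, 0, 0, 0, 0, 0, 1; 1, 0, 0, 0, 1, 1, 0])
        ![!![0, 0, 0, 1, 0, 0, 0; 0, 0, 1, 0, 0, 0, 0; 0, 1, 0, 0, 0, 0, 0; 1, 0, 0, 0, 0, (-1), 0; 0, 0, 0, 0, 0, 0, 0; 0, 0, 0, (-1), 0, 0, 0; 0, 0, 0, 0, 0, 0, 0], !![0, 1, 0, 0, 0, 0, 0; 1, 0, 0, 0, 0, (-1), 0; 0, 0, 0, 0, 0, 0, 0; 0, 0, 0, 0, 1, 0, 0; 0, 0, 0, 1, 0, 0, 0; 0, (-1), 0, 0, 0, 0, 0; 0, 0, 0, 0, 0, 0, 0]]) (by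
      rintro (_ | i)
      · ext a b; fin_cases a <;> fin_cases b <;> rfl
      · fin_cases i <;> ext a b <;> fin_cases a <;> fin_cases b <;> rfl)).dotProduct_mulVec_nonneg ![1,0,0,0,0,0,0]
    rw [lapp] at h
    simp only [eval_add, eval_smul, eval_mono, List.map_cons, List.map_nil,
      List.prod_cons, List.prod_nil, mul_one, Option.elim,
      Matrix.cons_val_zero, Matrix.cons_val_one, Matrix.head_cons,
      Matrix.add_mulVec, Matrix.smul_mulVec, ← Matrix.mulVec_mulVec] at h
    norm_num [Matrix.mulVec, dotProduct, Fin.sum_univ_succ, Matrix.cons_val_succ, Matrix.cons_val_zero, Matrix.of_apply] at h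
    linarith
  have g4 : (0:ℝ) ≤ (-4) * A₁ + (-4) * A₄ := by
    have h := (hpos 4 (fun v => v.elim (!![0, 0, 0, 1; 0, 0, 0, 0; 0, 0, 0, (-2); 1, 0, (-2), 0])
        ![!![0, 1, 0, 0; 1, 0, 1, 0; 0, 1, 0, 0; 0, 0, 0, 0], !![0, 0, 0, 0; 0, 0, 0, 0; 0, 0, 0, 0; 0, 0, 0, 0]]) (by
      rintro (_ | i)
      · ext a b; fin_cases a <;> fin_cases b <;> rfl
      · fin_cases i <;> ext a b <;> fin_cases a <;> fin_cases b <;> rfl)).dotProduct_mulVec_nonneg ![1,0,0,0]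
    rw [lapp] at h
    simp only [eval_add, eval_smul, eval_mono, List.map_cons, List.map_nil,
      List.prod_cons, List.prod_nil, mul_one, Option.elim,
      Matrix.cons_val_zero, Matrix.cons_val_one, Matrix.head_cons,
      Matrix.add_mulVec, Matrix.smul_mulVec, ← Matrix.mulVec_mulVec] at h
    norm_num [Matrix.mulVec, dotProduct, Fin.sum_univ_succ, Matrix.cons_val_succ, Matrix.cons_val_zero, Matrix.of_apply] at h
    linarith
  have g5 : (0:ℝ) ≤ (-4) * A₄ + (-4) * A₁₀ := by
    have h := (hpos 4 (fun v => v.elim (!![0, 0, 0, 1; 0, 0, 0, 0; 0, 0, 0, (-2); 1, 0, (-2), 0])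
        ![!![0, 0, 0, 0; 0, 0, 0, 0; 0, 0, 0, 0; 0, 0, 0, 0], !![0, 1, 0, 0; 1, 0, 1, 0; 0, 1, 0, 0; 0, 0, 0, 0]]) (by
      rintro (_ | i)
      · ext a b; fin_cases a <;> fin_cases b <;> rfl
      · fin_cases i <;> ext a b <;> fin_cases a <;> fin_cases b <;> rfl)).dotProduct_mulVec_nonneg ![1,0,0,0]
    rw [lapp] at h
    simp only [eval_add, eval_smul, eval_mono, List.map_cons, List.map_nil,
      List.prod_cons, List.prod_nil, mul_one, Option.elim,
      Matrix.cons_val_zero, Matrix.cons_val_one, Matrix.head_cons,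
      Matrix.add_mulVec, Matrix.smul_mulVec, ← Matrix.mulVec_mulVec] at h
    norm_num [Matrix.mulVec, dotProduct, Fin.sum_univ_succ, Matrix.cons_val_succ, Matrix.cons_val_zero, Matrix.of_apply] at h
    linarith
  have g6 : (0:ℝ) ≤ (-4) * A₂ + (-4) * A₉ := by
    have h := (hpos 7 (fun v => v.elim (!![0, 0, 0, 0, 0, 0, 1; 0, 0, 0, 0, 0, 0, 0; 0, 0, 0, 0, 0, 0, (-1); 0, 0, 0, 0, 0, 0, 0; 0, 0, 0, 0, 0, 0, 0; 0, 0, 0, 0, 0, 0, 1; 1, 0, (-1), 0, 0, 1, 0])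
        ![!![0, 0, 0, 1, 0, 0, 0; 0, 0, 1, 0, 0, 0, 0; 0, 1, 0, 0, 0, 0, 0; 1, 0, 0, 0, 0, (-1), 0; 0, 0, 0, 0, 0, 0, 0; 0, 0, 0, (-1), 0, 0, 0; 0, 0, 0, 0, 0, 0, 0], !![0, 1, 0, 0, 0, 0, 0; 1, 0, 0, 0, 0, (-1), 0; 0, 0, 0, 0, 0, 0, 0; 0, 0, 0, 0, 1, 0, 0; 0, 0, 0, 1, 0, 0, 0; 0, (-1), 0, 0, 0, 0, 0; 0, 0, 0, 0, 0, 0, 0]]) (by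
      rintro (_ | i)
      · ext a b; fin_cases a <;> fin_cases b <;> rfl
      · fin_cases i <;> ext a b <;> fin_cases a <;> fin_cases b <;> rfl)).dotProduct_mulVec_nonneg ![1,0,0,0,0,0,0]
    rw [lapp] at h
    simp only [eval_add, eval_smul, eval_mono, List.map_cons, List.map_nil,
      List.prod_cons, List.prod_nil, mul_one, Option.elim,
      Matrix.cons_val_zero, Matrix.cons_val_one, Matrix.head_cons,
      Matrix.add_mulVec, Matrix.smul_mulVec, ← Matrix.mulVec_mulVec] at h
    norm_num [Matrix.mulVec, dotProduct, Fin.sum_univ_succ, Matrix.cons_val_succ, Matrix.cons_val_zero, Matrix.of_apply] at h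
    linarith
  have g7 : (0:ℝ) ≤ (-4) * A₃ + (-4) * A₇ := by
    have h := (hpos 7 (fun v => v.elim (!![0, 0, 0, 0, 0, 0, 1; 0, 0, 0, 0, 0, 0, 0; 0, 0, 0, 0, 0, 0, 0; 0, 0, 0, 0, 0, 0, 0; 0, 0, 0, 0, 0, 0, (-1); 0, 0, 0, 0, 0, 0, 1; 1, 0, 0, 0, (-1), 1, 0])
        ![!![0, 0, 0, 1, 0, 0, 0; 0, 0, 1, 0, 0, 0, 0; 0, 1, 0, 0, 0, 0, 0; 1, 0, 0, 0, 0, (-1), 0; 0, 0, 0, 0, 0, 0, 0; 0, 0, 0, (-1), 0, 0, 0; 0, 0, 0, 0, 0, 0, 0], !![0, 1, 0, 0, 0, 0, 0; 1, 0, 0, 0, 0, (-1), 0; 0, 0, 0, 0, 0, 0, 0; 0, 0, 0, 0, 1, 0, 0; 0, 0, 0, 1, 0, 0, 0; 0, (-1), 0, 0, 0, 0, 0; 0, 0, 0, 0, 0, 0, 0]]) (by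
      rintro (_ | i)
      · ext a b; fin_cases a <;> fin_cases b <;> rfl
      · fin_cases i <;> ext a b <;> fin_cases a <;> fin_cases b <;> rfl)).dotProduct_mulVec_nonneg ![1,0,0,0,0,0,0]
    rw [lapp] at h
    simp only [eval_add, eval_smul, eval_mono, List.map_cons, List.map_nil,
      List.prod_cons, List.prod_nil, mul_one, Option.elim,
      Matrix.cons_val_zero, Matrix.cons_val_one, Matrix.head_cons,
      Matrix.add_mulVec, Matrix.smul_mulVec, ← Matrix.mulVec_mulVec] at h
    norm_num [Matrix.mulVec, dotProduct, Fin.sum_univ_succ, Matrix.cons_val_succ, Matrix.cons_val_zero, Matrix.of_apply] at h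
    linarith
  refine ⟨by linarith, by linarith, by linarith, by linarith⟩
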